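/- Let M ≥ 1, let 0 = x₀ < ⋯ < x_M = 1 be a partition of [0,1], N ≥ 1, k₀,…,k_{N−1} > 0. For each time level n = 0,…,N and cell i ∈ {0,…,M−1} let ρⁿᵢ, vⁿᵢ : [xᵢ, xᵢ₊₁] → ℝ be continuously differentiable, with vⁿ₀(0) = 0 and vⁿ_{M−1}(1) = 0 for all n. Write uⁿ⁺½ᵢ := ½(uⁿᵢ + u^{n+1}ᵢ). Assume for each n = 0,…,N−1 the fully discrete DG mass equation tested with the constant 1 holds: Σᵢ ∫_{xᵢ}^{xᵢ₊₁} [ (ρ^{n+1}ᵢ − ρⁿᵢ)/kₙ + ∂ₓ( ρⁿ⁺½ᵢ vⁿ⁺½ᵢ ) ] dx = Σ_{j=1}^{M−1} [ρ^{n+½} v^{n+½}]ⱼ, where [ρ^{n+½} v^{n+½}]ⱼ := (ρⁿ⁺½_{j−1} vⁿ⁺½_{j−1})(xⱼ) − (ρⁿ⁺½ⱼ vⁿ⁺½ⱼ)(xⱼ). Then the total discrete mass is conserved: Σᵢ ∫_{xᵢ}^{xᵢ₊₁} ρⁿᵢ dx = Σᵢ ∫_{xᵢ}^{xᵢ₊₁}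 ρ⁰ᵢ dx for every n = 0,…,N. -/

import Mathlib

open Set MeasureTheory

/-- Mass conservation for the fully discrete (Crank–Nicolson in time, DG in
space) scheme for the NSK system on a partition `0 = x₀ < ⋯ < x_M = 1`: if at
each time level the cellwise functions are `C¹`, the velocity vanishes at the
boundary of `[0,1]`, and the fully discrete DG mass equation with central flux
at the half-step values, tested with `Ψ ≡ 1`, holds for each `n < N`, then the
total discrete mass `Σᵢ ∫ ρⁿᵢ` is the same at every time level `n ≤ N`. -/
theorem dg_fully_discrete_mass_conservation
    (M : ℕ) (hM : 1 ≤ M) (xp : ℕ → ℝ)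
    (hx0 : xp 0 = 0) (hxM : xp M = 1)
    (hx : ∀ i < M, xp i < xp (i + 1))
    (N : ℕ) (hN : 1 ≤ N) (k : ℕ → ℝ) (hk : ∀ n < N, 0 < k n)
    (ρ v : ℕ → ℕ → ℝ → ℝ)  -- time level, cell index, position
    (hρ : ∀ n ≤ N, ∀ i < M, ContDiff ℝ 1 (ρ n i))
    (hv : ∀ n ≤ N, ∀ i < M, ContDiff ℝ 1 (v n i))
    -- boundary conditions
    (hbv : ∀ n ≤ N, v n 0 0 = 0 ∧ v n (M - 1) 1 = 0)
    -- fully discrete DG mass equation tested with the constant 1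
    (hDG : ∀ n < N,
      ∑ i ∈ Finset.range M, ∫ y in xp i..xp (i + 1),
          ((ρ (n + 1) i y - ρ n i y) / k n
            + deriv (fun z => ((ρ n i z + ρ (n + 1) i z) / 2)
                * ((v n i z + v (n + 1) i z) / 2)) y)
        = ∑ j ∈ Finset.Ico 1 M,
            (((ρ n (j - 1) (xp j) + ρ (n + 1) (j - 1) (xp j)) / 2)
                * ((v n (j - 1) (xp j) + v (n + 1) (j - 1) (xp j)) / 2)
              - ((ρ n j (xp j) + ρ (n + 1) j (xp j)) / 2)
                * ((v n j (xp j) + v (n + 1) j (xp j)) / 2))) :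
    ∀ n ≤ N,
      (∑ i ∈ Finset.range M, ∫ y in xp i..xp (i + 1), ρ n i y)
        = ∑ i ∈ Finset.range M, ∫ y in xp i..xp (i + 1), ρ 0 i y := by
  have key : ∀ n < N,
      (∑ i ∈ Finset.range M, ∫ y in xp i..xp (i + 1), ρ (n + 1) i y)
        = ∑ i ∈ Finset.range M, ∫ y in xp i..xp (i + 1), ρ n i y := by
    intro n hn
    have hn1 : n + 1 ≤ N := hn
    have hnle : n ≤ N := le_of_lt hn
    set g : ℕ → ℝ → ℝ := fun i z =>
      ((ρ n i z + ρ (n + 1) i z) / 2) * ((v n i z + v (n + 1) i z) / 2) with hgdef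
    have hgC1 : ∀ i < M, ContDiff ℝ 1 (g i) := by
      intro i hi
      exact (((hρ n hnle i hi).add (hρ (n + 1) hn1 i hi)).div_const 2).mul
        (((hv n hnle i hi).add (hv (n + 1) hn1 i hi)).div_const 2)
    -- FTC on each cell
    have hFTC : ∀ i < M, (∫ y in xp i..xp (i + 1), deriv (g i) y)
        = g i (xp (i + 1)) - g i (xp i) := by
      intro i hi
      apply intervalIntegral.integral_deriv_eq_sub
      · intro x _
        exact ((hgC1 i hi).differentiable one_ne_zero).differentiableAt
      · exact ((hgC1 i hi).continuous_deriv le_rfl).intervalIntegrable _ _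
    -- split the integrals in hDG
    have hint1 : ∀ i < M, IntervalIntegrable
        (fun y => (ρ (n + 1) i y - ρ n i y) / k n) volume (xp i) (xp (i + 1)) := by
      intro i hi
      exact (((hρ (n + 1) hn1 i hi).continuous.sub
        (hρ n hnle i hi).continuous).div_const _).intervalIntegrable _ _
    have hsplit : ∀ i < M,
        (∫ y in xp i..xp (i + 1),
          ((ρ (n + 1) i y - ρ n i y) / k n + deriv (g i) y))
        = ((∫ y in xp i..xp (i + 1), ρ (n + 1) i y)
            - ∫ y in xp i..xp (i + 1), ρ n i y) / k n
          + (g i (xp (i + 1)) - g i (xp i)) := by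
      intro i hi
      rw [intervalIntegral.integral_add (hint1 i hi)
        (((hgC1 i hi).continuous_deriv le_rfl).intervalIntegrable _ _), hFTC i hi]
      congr 1
      rw [intervalIntegral.integral_div,
        intervalIntegral.integral_sub
          ((hρ (n + 1) hn1 i hi).continuous.intervalIntegrable _ _)
          ((hρ n hnle i hi).continuous.intervalIntegrable _ _)]
    -- telescoping identities
    have h1 : ∑ i ∈ Finset.range M, g i (xp (i + 1))
        = (∑ j ∈ Finset.Ico 1 M, g (j - 1) (xp j)) + g (M - 1) (xp M) := by
      have e1 : ∑ j ∈ Finset.Ico 1 (M + 1), g (j - 1) (xp j)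
          = ∑ i ∈ Finset.range M, g i (xp (i + 1)) := by
        rw [Finset.sum_Ico_eq_sum_range]
        refine Finset.sum_congr (by simp) fun i _ => ?_
        rw [Nat.add_comm 1 i, Nat.add_sub_cancel]
      rw [← e1, Finset.sum_Ico_succ_top hM]
    have h2 : ∑ i ∈ Finset.range M, g i (xp i)
        = g 0 (xp 0) + ∑ j ∈ Finset.Ico 1 M, g j (xp j) := by
      rw [Finset.range_eq_Ico, Finset.sum_eq_sum_Ico_succ_bot hM]
    -- boundary values vanish
    have hb0 : g 0 (xp 0) = 0 := by
      simp [hgdef, hx0, (hbv n hnle).1, (hbv (n + 1) hn1).1]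
    have hbM : g (M - 1) (xp M) = 0 := by
      simp [hgdef, hxM, (hbv n hnle).2, (hbv (n + 1) hn1).2]
    -- combine
    have hDGn := hDG n hn
    rw [Finset.sum_congr rfl (fun i hi => hsplit i (Finset.mem_range.mp hi))] at hDGn
    rw [Finset.sum_add_distrib, Finset.sum_sub_distrib, h1, h2] at hDGn
    rw [hb0, hbM] at hDGn
    have hflux : ∑ j ∈ Finset.Ico 1 M,
        (((ρ n (j - 1) (xp j) + ρ (n + 1) (j - 1) (xp j)) / 2)
            * ((v n (j - 1) (xp j) + v (n + 1) (j - 1) (xp j)) / 2)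
          - ((ρ n j (xp j) + ρ (n + 1) j (xp j)) / 2)
            * ((v n j (xp j) + v (n + 1) j (xp j)) / 2))
        = (∑ j ∈ Finset.Ico 1 M, g (j - 1) (xp j))
          - ∑ j ∈ Finset.Ico 1 M, g j (xp j) := by
      rw [← Finset.sum_sub_distrib]
    rw [hflux] at hDGn
    have hzero : ∑ i ∈ Finset.range M,
        ((( ∫ y in xp i..xp (i + 1), ρ (n + 1) i y)
          - ∫ y in xp i..xp (i + 1), ρ n i y) / k n) = 0 := by linarith
    rw [← Finset.sum_div, Finset.sum_sub_distrib,
      div_eq_zero_iff] at hzero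
    rcases hzero with h | h
    · linarith
    · exact absurd h (ne_of_gt (hk n hn))
  intro n hnN
  induction n with
  | zero => rfl
  | succ m ih =>
    rw [key m (by omega)]
    exact ih (by omega)
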